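/- Downward dimension reduction: over RCA_0, for ordinals β < α (in a nested fundamental-sequence system with a norm function), RT^{!ω^α}_k implies RT^{!ω^β}_k. Specifically, given a coloring c of the ω^β-size subsets of an infinite X, the coloring d of ω^α-size subsets of X \ {0,...,n} (where n = |ω^β| is the norm) defined by d(s) = c(t) for t the unique ω^β-size initial segment of s, is well-defined, and every infinite homogeneous set for d is homogeneous for c. -/

import Mathlib

open Ordinal

/-- `α[s]`: iterate the fundamental sequence `F` along the increasing enumeration of `s`. -/
def ordIter (F : Ordinal → ℕ → Ordinal) (α : Ordinal) (s : Finset ℕ) : Ordinal :=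
  (s.sort (· ≤ ·)).foldl F α

/-- `s` is `α`-large: `α[s] = 0`. -/
def IsLarge (F : Ordinal → ℕ → Ordinal) (α : Ordinal) (s : Finset ℕ) : Prop :=
  ordIter F α s = 0

/-- `s` is exactly `α`-large (`α`-size). -/
def IsSize (F : Ordinal → ℕ → Ordinal) (α : Ordinal) (s : Finset ℕ) : Prop :=
  IsLarge F α s ∧ ∀ h : s.Nonempty, ¬ IsLarge F α (s.erase (s.max' h))

/-- The system of fundamental sequences `F` is nested. -/
def Nested (F : Ordinal → ℕ → Ordinal) : Prop :=
  ∀ (γ β : Ordinal) (n : ℕ), 1 < n → γ < β → ¬ (F β n < γ ∧ F γ n < F β n)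

/-- `t` is an initial segment (prefix) of `s` with respect to the increasing enumeration. -/
def IsPrefixOf (t s : Finset ℕ) : Prop :=
  t ⊆ s ∧ ∀ x ∈ t, ∀ y ∈ s, y ≤ x → y ∈ t

/-- `RT^{!α}_k`. -/
def RTsize (F : Ordinal → ℕ → Ordinal) (α : Ordinal) (k : ℕ) : Prop :=
  ∀ X : Set ℕ, X.Infinite → ∀ c : Finset ℕ → Fin k,
    ∃ H : Set ℕ, H ⊆ X ∧ H.Infinite ∧
      ∃ i : Fin k, ∀ s : Finset ℕ, ↑s ⊆ H → IsSize F α s → c s = i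

/-- Downward dimension reduction: for `β < α`, `RT^{!ω^α}_k` implies `RT^{!ω^β}_k`;
moreover, for any coloring `c` of the `ω^β`-size subsets of an infinite `X`, any
coloring `d` of the `ω^α`-size subsets above the norm `|ω^β|` defined by
`d(s) = c(t)` for `t` the unique `ω^β`-size initial segment of `s` is such that every
infinite homogeneous set for `d` is homogeneous for `c`. -/
lemma sort_insert_max (u : Finset ℕ) (m : ℕ) (h : ∀ x ∈ u, x < m) :
    (insert m u).sort (· ≤ ·) = u.sort (· ≤ ·) ++ [m] := by
  have hm : m ∉ u := fun hmu => lt_irrefl m (h m hmu)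
  refine (fun hp h1 h2 => List.Perm.eq_of_pairwise' h1 h2 hp) ?_ (Finset.pairwise_sort _ _) ?_
  · refine (Finset.sort_perm_toList _ _).trans ?_
    refine ((Finset.toList_insert hm).trans ?_).trans (List.perm_append_singleton m _).symm
    exact List.Perm.cons m (Finset.sort_perm_toList _ _).symm
  · rw [List.pairwise_append]
    refine ⟨Finset.pairwise_sort _ _, List.pairwise_singleton _ _, ?_⟩
    intro a ha b hb
    rw [List.mem_singleton] at hb
    subst hb
    exact le_of_lt (h a ((Finset.mem_sort _).1 ha))

lemma ordIter_insert_max (F : Ordinal → ℕ → Ordinal) (γ : Ordinal) (u : Finset ℕ) (m : ℕ)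
    (h : ∀ x ∈ u, x < m) : ordIter F γ (insert m u) = F (ordIter F γ u) m := by
  rw [ordIter, sort_insert_max u m h, List.foldl_append]
  rfl

lemma max'_insert_max (u : Finset ℕ) (m : ℕ) (h : ∀ x ∈ u, x < m) (hne : (insert m u).Nonempty) :
    (insert m u).max' hne = m := by
  apply le_antisymm
  · apply Finset.max'_le
    intro y hy
    rcases Finset.mem_insert.1 hy with rfl | hy
    · exact le_rfl
    · exact le_of_lt (h y hy)
  · exact Finset.le_max' _ m (Finset.mem_insert_self m u)

lemma isPrefixOf_trans {a b c : Finset ℕ} (h1 : IsPrefixOf a b) (h2 : IsPrefixOf b c) :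
    IsPrefixOf a c := by
  refine ⟨h1.1.trans h2.1, fun x hx y hy hyx => ?_⟩
  exact h1.2 x hx y (h2.2 x (h1.1 hx) y hy hyx) hyx

lemma extend_to_size (F : Ordinal → ℕ → Ordinal)
    (hself : ∀ (α : Ordinal) (n : ℕ), α ≠ 0 → F α n < α)
    (γ : Ordinal) (H : Set ℕ) (hH : H.Infinite) :
    ∀ o : Ordinal, ∀ u : Finset ℕ, ↑u ⊆ H → ordIter F γ u = o → o ≠ 0 →
      ∃ s : Finset ℕ, ↑s ⊆ H ∧ IsPrefixOf u s ∧ IsSize F γ s := by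
  intro o
  induction o using Ordinal.induction with
  | h o IH =>
    intro u huH huo ho
    obtain ⟨m, hmH, hm'⟩ := hH.exists_gt (u.sup id)
    have hm : ∀ x ∈ u, x < m := fun x hx =>
      lt_of_le_of_lt (Finset.le_sup (f := id) hx) hm'
    have hmu : m ∉ u := fun h => lt_irrefl m (hm m h)
    have hins : ordIter F γ (insert m u) = F o m := by
      rw [ordIter_insert_max F γ u m hm, huo]
    have hpre : IsPrefixOf u (insert m u) := by
      refine ⟨Finset.subset_insert _ _, fun x hx y hy hyx => ?_⟩
      rcases Finset.mem_insert.1 hy with rfl | hy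
      · exact absurd hyx (not_le.2 (hm x hx))
      · exact hy
    have hsubH : ↑(insert m u) ⊆ H := by
      rw [Finset.coe_insert]
      exact Set.insert_subset hmH huH
    by_cases h0 : F o m = 0
    · refine ⟨insert m u, hsubH, hpre, ?_, ?_⟩
      · rw [IsLarge, hins, h0]
      · intro hne
        rw [max'_insert_max u m hm hne, Finset.erase_insert hmu, IsLarge, huo]
        exact ho
    · obtain ⟨s, h1, h2, h3⟩ := IH (F o m) (hself o m ho) (insert m u) hsubH hins h0
      exact ⟨s, h1, isPrefixOf_trans hpre h2, h3⟩

theorem rt_downward_reduction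
    (F : Ordinal → ℕ → Ordinal)
    (h0 : ∀ n : ℕ, F 0 n = 0)
    (hsucc : ∀ (α : Ordinal) (n : ℕ), F (α + 1) n = α)
    (hself : ∀ (α : Ordinal) (n : ℕ), α ≠ 0 → F α n < α)
    (hnested : Nested F)
    (Nrm : Ordinal → ℕ)
    (hNrmLarge : ∀ β δ : Ordinal, β < δ → ∀ s : Finset ℕ,
      (∀ x ∈ s, Nrm β ≤ x) → IsLarge F δ s → IsLarge F β s)
    (hNrmPrefix : ∀ β δ : Ordinal, β < δ → ∀ s : Finset ℕ,
      (∀ x ∈ s, Nrm β ≤ x) → IsLarge F δ s →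
        ∃! t : Finset ℕ, IsPrefixOf t s ∧ IsSize F β t)
    (α β : Ordinal) (hβα : β < α) (k : ℕ) (hk : 1 ≤ k) :
    (RTsize F (omega0 ^ α) k → RTsize F (omega0 ^ β) k) ∧
    (∀ X : Set ℕ, X.Infinite → ∀ c d : Finset ℕ → Fin k,
      (∀ s : Finset ℕ, ↑s ⊆ X → (∀ x ∈ s, Nrm (omega0 ^ β) < x) →
        IsSize F (omega0 ^ α) s →
        ∀ t : Finset ℕ, IsPrefixOf t s → IsSize F (omega0 ^ β) t → d s = c t) →
      ∀ H : Set ℕ, H ⊆ {x ∈ X | Nrm (omega0 ^ β) < x} → H.Infinite →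
        (∃ i : Fin k, ∀ s : Finset ℕ, ↑s ⊆ H → IsSize F (omega0 ^ α) s → d s = i) →
        ∃ i : Fin k, ∀ t : Finset ℕ, ↑t ⊆ H → IsSize F (omega0 ^ β) t → c t = i) := by
  have hexp : omega0 ^ β < omega0 ^ α := (opow_lt_opow_iff_right one_lt_omega0).2 hβα
  have hαne : omega0 ^ α ≠ 0 := opow_ne_zero α omega0_ne_zero
  -- Part 2
  have P2 : ∀ X : Set ℕ, X.Infinite → ∀ c d : Finset ℕ → Fin k,
      (∀ s : Finset ℕ, ↑s ⊆ X → (∀ x ∈ s, Nrm (omega0 ^ β) < x) →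
        IsSize F (omega0 ^ α) s →
        ∀ t : Finset ℕ, IsPrefixOf t s → IsSize F (omega0 ^ β) t → d s = c t) →
      ∀ H : Set ℕ, H ⊆ {x ∈ X | Nrm (omega0 ^ β) < x} → H.Infinite →
        (∃ i : Fin k, ∀ s : Finset ℕ, ↑s ⊆ H → IsSize F (omega0 ^ α) s → d s = i) →
        ∃ i : Fin k, ∀ t : Finset ℕ, ↑t ⊆ H → IsSize F (omega0 ^ β) t → c t = i := by
    intro X hXinf c d hcompat H hHsub hHinf ⟨j, hj⟩
    refine ⟨j, fun t htH htsize => ?_⟩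
    have htX : ↑t ⊆ X := fun x hx => (hHsub (htH hx)).1
    have htNrm : ∀ x ∈ t, Nrm (omega0 ^ β) < x := fun x hx => (hHsub (htH hx)).2
    by_cases hA : ordIter F (omega0 ^ α) t = 0
    · -- t is itself ω^α-size
      have tsizeα : IsSize F (omega0 ^ α) t := by
        refine ⟨hA, fun hne hl => ?_⟩
        exact htsize.2 hne (hNrmLarge _ _ hexp _
          (fun x hx => le_of_lt (htNrm x (Finset.erase_subset _ _ hx))) hl)
      have hpre : IsPrefixOf t t := ⟨Finset.Subset.refl t, fun x hx y hy _ => hy⟩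
      rw [← hcompat t htX htNrm tsizeα t hpre htsize]
      exact hj t htH tsizeα
    · obtain ⟨s, hsH, hpre, hsize⟩ := extend_to_size F hself (omega0 ^ α) H hHinf
        (ordIter F (omega0 ^ α) t) t htH rfl hA
      have hsX : ↑s ⊆ X := fun x hx => (hHsub (hsH hx)).1
      have hsNrm : ∀ x ∈ s, Nrm (omega0 ^ β) < x := fun x hx => (hHsub (hsH hx)).2
      rw [← hcompat s hsX hsNrm hsize t hpre htsize]
      exact hj s hsH hsize
  refine ⟨?_, P2⟩
  -- Part 1
  intro hα X hXinf c
  set X' : Set ℕ := {x ∈ X | Nrm (omega0 ^ β) < x} with hX'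
  have hX'inf : X'.Infinite := by
    have : X \ {x : ℕ | x ≤ Nrm (omega0 ^ β)} ⊆ X' := by
      intro x hx
      exact ⟨hx.1, not_le.1 hx.2⟩
    exact Set.Infinite.mono this (hXinf.diff (Set.finite_Iic (Nrm (omega0 ^ β))))
  classical
  set d : Finset ℕ → Fin k := fun s =>
    if h : ∃ t : Finset ℕ, IsPrefixOf t s ∧ IsSize F (omega0 ^ β) t then c h.choose
    else ⟨0, hk⟩ with hd
  obtain ⟨H, hHX', hHinf, j, hj⟩ := hα X' hX'inf d
  have hcompat : ∀ s : Finset ℕ, ↑s ⊆ X → (∀ x ∈ s, Nrm (omega0 ^ β) < x) →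
      IsSize F (omega0 ^ α) s →
      ∀ t : Finset ℕ, IsPrefixOf t s → IsSize F (omega0 ^ β) t → d s = c t := by
    intro s hsX hsNrm hsize t hpre htsize
    have hex : ∃ t : Finset ℕ, IsPrefixOf t s ∧ IsSize F (omega0 ^ β) t := ⟨t, hpre, htsize⟩
    rw [hd]
    simp only [dif_pos hex]
    congr 1
    obtain ⟨u, hu, huniq⟩ := hNrmPrefix (omega0 ^ β) (omega0 ^ α) hexp s
      (fun x hx => le_of_lt (hsNrm x hx)) hsize.1
    rw [huniq _ hex.choose_spec, huniq _ ⟨hpre, htsize⟩]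
  obtain ⟨i, hi⟩ := P2 X hXinf c d hcompat H hHX' hHinf ⟨j, hj⟩
  exact ⟨H, fun x hx => (hHX' hx).1, hHinf, i, hi⟩
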